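/- Let (X,d) be a complete metric space and φ : X → ℝ a lower semicontinuous function bounded below. If T : X → X satisfies d(x, Tx) ≤ φ(x) − φ(Tx) for all x ∈ X, then T has a fixed point. -/
import Mathlib


/-- Caristi's fixed point theorem. -/
theorem caristi_fixed_point {X : Type*} [MetricSpace X] [CompleteSpace X] [Nonempty X]
    (φ : X → ℝ) (hlsc : LowerSemicontinuous φ) (hbd : BddBelow (Set.range φ))
    (T : X → X) (hT : ∀ x, dist x (T x) ≤ φ x - φ (T x)) :
    ∃ x, T x = x := by
  classical
  obtain ⟨B, hB⟩ := hbd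
  have hBle : ∀ x, B ≤ φ x := fun x => hB (Set.mem_range_self x)
  -- the Caristi order relation
  set le : X → X → Prop := fun x y => dist x y ≤ φ x - φ y with hle_def
  have le_refl : ∀ x, le x x := fun x => by simp [hle_def]
  have le_trans : ∀ {x y z}, le x y → le y z → le x z := by
    intro x y z h1 h2
    calc dist x z ≤ dist x y + dist y z := dist_triangle x y z
    _ ≤ (φ x - φ y) + (φ y - φ z) := add_le_add h1 h2
    _ = φ x - φ z := by ring
  have le_phi : ∀ {x y}, le x y → φ y ≤ φ x := by
    intro x y h
    have := dist_nonneg (x := x) (y := y)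
    linarith [h]
  -- the sets S x are closed and nonempty
  set S : X → Set X := fun x => {y | le x y} with hS_def
  have hS_mem : ∀ x, x ∈ S x := fun x => le_refl x
  have hS_closed : ∀ x, IsClosed (S x) := by
    intro x
    have hcont : LowerSemicontinuous fun y => dist x y + φ y :=
      ((continuous_const.dist continuous_id).lowerSemicontinuous).add hlsc
    have : S x = (fun y => dist x y + φ y) ⁻¹' Set.Iic (φ x) := by
      ext y; simp [hS_def, hle_def, Set.mem_preimage]; constructor <;> intro h <;> linarith
    rw [this]
    exact hcont.isClosed_preimage (φ x)
  -- choose successive approximate minimizers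
  have key : ∀ (n : ℕ) (x : X), ∃ y, le x y ∧ φ y < sInf (φ '' S x) + (1/2) ^ n := by
    intro n x
    obtain ⟨a, ⟨y, hy, rfl⟩, ha⟩ := Real.lt_sInf_add_pos (s := φ '' S x)
      ⟨φ x, x, hS_mem x, rfl⟩ (by positivity : (0:ℝ) < (1/2) ^ n)
    exact ⟨y, hy, ha⟩
  choose next hnext1 hnext2 using key
  -- the sequence
  set u : ℕ → X := fun n => Nat.rec (Classical.arbitrary X) (fun n x => next n x) n with hu_def
  have hu_succ : ∀ n, u (n + 1) = next n (u n) := fun n => rfl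
  have hstep : ∀ n, le (u n) (u (n + 1)) := fun n => hnext1 n (u n)
  have hchain : ∀ {n m}, n ≤ m → le (u n) (u m) := by
    intro n m h
    induction m with
    | zero => simp_all [Nat.le_zero.mp h, le_refl]
    | succ m ih =>
      rcases Nat.lt_or_ge n (m + 1) with h' | h'
      · exact le_trans (ih (Nat.lt_succ_iff.mp h')) (hstep m)
      · have : n = m + 1 := Nat.le_antisymm h h'
        subst this; exact le_refl _
  have hmono : ∀ {n m}, n ≤ m → φ (u m) ≤ φ (u n) := fun h => le_phi (hchain h)
  -- φ ∘ u converges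
  have hbdd : BddBelow (Set.range (fun n => φ (u n))) :=
    ⟨B, by rintro _ ⟨n, rfl⟩; exact hBle _⟩
  set L : ℝ := ⨅ n, φ (u n) with hL_def
  have hphi_tendsto : Filter.Tendsto (fun n => φ (u n)) Filter.atTop (nhds L) :=
    tendsto_atTop_ciInf (fun n m h => hmono h) hbdd
  have hL_le : ∀ n, L ≤ φ (u n) := fun n => ciInf_le hbdd n
  -- u is Cauchy
  have hcauchy : CauchySeq u := by
    apply cauchySeq_of_le_tendsto_0 (fun n => φ (u n) - L)
    · intro n m N hn hm
      rcases Nat.le_total n m with h | h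
      · have := hchain h
        have h1 := hmono hn
        have h2 := hL_le m
        simp only [hle_def] at this
        linarith
      · have := hchain h
        have h1 := hmono hm
        have h2 := hL_le n
        rw [dist_comm]
        simp only [hle_def] at this
        linarith
    · have h := hphi_tendsto.sub (tendsto_const_nhds (x := L) (f := Filter.atTop (α := ℕ)))
      simpa using h
  obtain ⟨z, hz⟩ := cauchySeq_tendsto_of_complete hcauchy
  -- z is in every S (u n)
  have hzS : ∀ n, z ∈ S (u n) := by
    intro n
    refine (hS_closed (u n)).mem_of_tendsto hz ?_
    filter_upwards [Filter.eventually_ge_atTop n] with m hm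
    exact hchain hm
  -- φ z ≤ L by lower semicontinuity
  have hφz : φ z ≤ L := by
    by_contra h
    push_neg at h
    set y : ℝ := (L + φ z) / 2 with hy_def
    have hy1 : L < y := by rw [hy_def]; linarith
    have hy2 : y < φ z := by rw [hy_def]; linarith
    have hev : ∀ᶠ n in Filter.atTop, y < φ (u n) := hz.eventually (hlsc z y hy2)
    have : y ≤ L := ge_of_tendsto hphi_tendsto (hev.mono fun n hn => hn.le)
    linarith
  -- T z is in every S (u n)
  have hTz : ∀ n, T z ∈ S (u n) := fun n => le_trans (hzS n) (by
    have := hT z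
    simpa [hle_def] using this)
  -- φ (T z) ≥ L
  have hφTz : L ≤ φ (T z) := by
    have h1 : ∀ n, φ (u (n + 1)) - (1/2) ^ n < φ (T z) := by
      intro n
      have h2 : sInf (φ '' S (u n)) ≤ φ (T z) := by
        apply csInf_le ⟨B, by rintro _ ⟨y, _, rfl⟩; exact hBle y⟩
        exact ⟨T z, hTz n, rfl⟩
      have h3 := hnext2 n (u n)
      rw [← hu_succ n] at h3
      linarith
    have htend : Filter.Tendsto (fun n => φ (u (n + 1)) - (1/2:ℝ) ^ n)
        Filter.atTop (nhds (L - 0)) := by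
      exact ((hphi_tendsto.comp (Filter.tendsto_add_atTop_nat 1)).sub
        (tendsto_pow_atTop_nhds_zero_of_lt_one (by norm_num) (by norm_num)))
    have := le_of_tendsto htend (Filter.Eventually.of_forall fun n => (h1 n).le)
    simpa using this
  -- conclude
  have hd : dist z (T z) ≤ 0 := by
    have := hT z
    have := hzS 0
    linarith [hT z, hφz, hφTz]
  exact ⟨z, (dist_le_zero.mp hd).symm⟩
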